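/- For every real number y ∈ [0,1] there exist x₁, x₂, x₃ in the middle-third Cantor set K with y = x₁·x₂·x₃. Equivalently, the set {x²·z : x, z ∈ K} contains [0,1]. -/

import Mathlib

open Set

noncomputable def cantorK : Set ℝ :=
  {x | ∃ α : ℕ → ℝ, (∀ k, α k = 0 ∨ α k = 2) ∧ x = ∑' k : ℕ, α k / 3 ^ (k + 1)}

namespace CantorAux

lemma pow_shift (m k : ℕ) : (3:ℝ) ^ (k + m + 1) = 3 ^ (m + 1) * 3 ^ k := by
  rw [← pow_add]; congr 1; omega

lemma geom_eq (m k : ℕ) : (2 / 3 ^ (m+1)) * (1/3 : ℝ) ^ k = 2 / 3 ^ (k + m + 1) := by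
  rw [div_pow, one_pow, div_mul_div_comm, mul_one, pow_shift]

lemma summable_digits (α : ℕ → ℝ) (h : ∀ k, α k = 0 ∨ α k = 2) :
    Summable (fun k => α k / 3 ^ (k + 1)) := by
  have hg : Summable (fun k : ℕ => (2 / 3 ^ (0+1)) * (1/3 : ℝ) ^ k) :=
    (summable_geometric_of_lt_one (by norm_num) (by norm_num)).mul_left _
  refine Summable.of_nonneg_of_le (fun k => ?_) (fun k => ?_) hg
  · rcases h k with hk | hk <;> rw [hk] <;> positivity
  · rw [geom_eq]
    rcases h k with hk | hk <;> simp [hk] <;> positivity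

lemma tail_le (α : ℕ → ℝ) (h : ∀ k, α k = 0 ∨ α k = 2) (m : ℕ) :
    (∑' k : ℕ, α (k + m) / 3 ^ (k + m + 1)) ≤ 1 / 3 ^ m := by
  have hs : Summable (fun k => α (k + m) / 3 ^ (k + m + 1)) :=
    ((summable_nat_add_iff (f := fun k => α k / 3 ^ (k+1)) m).2 (summable_digits α h))
  have hg : Summable (fun k : ℕ => (2 / 3 ^ (m+1)) * (1/3 : ℝ) ^ k) :=
    (summable_geometric_of_lt_one (by norm_num) (by norm_num)).mul_left _
  have hle : (∑' k : ℕ, α (k + m) / 3 ^ (k + m + 1)) ≤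
      ∑' k : ℕ, (2 / 3 ^ (m+1)) * (1/3 : ℝ) ^ k := by
    apply Summable.tsum_le_tsum _ hs hg
    intro k
    rw [geom_eq]
    rcases h (k + m) with hk | hk <;> simp [hk] <;> positivity
  refine hle.trans ?_
  rw [tsum_mul_left, tsum_geometric_of_lt_one (by norm_num) (by norm_num)]
  refine le_of_eq ?_
  rw [pow_succ]
  have h3 : ((3:ℝ)^m) ≠ 0 := by positivity
  field_simp
  ring

lemma sandwich (α : ℕ → ℝ) (h : ∀ k, α k = 0 ∨ α k = 2) (m : ℕ) :
    (∑ k ∈ Finset.range m, α k / 3 ^ (k + 1)) ≤ (∑' k : ℕ, α k / 3 ^ (k + 1)) ∧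
    (∑' k : ℕ, α k / 3 ^ (k + 1)) ≤ (∑ k ∈ Finset.range m, α k / 3 ^ (k + 1)) + 1 / 3 ^ m := by
  have hs := summable_digits α h
  have hsplit := Summable.sum_add_tsum_nat_add (k := m) hs
  constructor
  · rw [← hsplit]
    have : 0 ≤ ∑' k : ℕ, α (k + m) / 3 ^ (k + m + 1) := by
      apply tsum_nonneg
      intro k
      rcases h (k + m) with hk | hk <;> rw [hk] <;> positivity
    linarith
  · rw [← hsplit]
    have := tail_le α h m
    linarith


noncomputable def nA (u s a b : ℝ) : ℝ := if u ≤ (a+s)^2*(b+3*s) then a else a + 2*s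

noncomputable def nB (u s a b : ℝ) : ℝ := if u ≤ (a+s)^2*(b+s) then b else b + 2*s

noncomputable def D (u : ℝ) : ℕ → ℝ × ℝ
  | 0 => (2/3, 2/3)
  | m+1 => (nA u (1/3^(m+2)) (D u m).1 (D u m).2,
            nB u (1/3^(m+2)) (nA u (1/3^(m+2)) (D u m).1 (D u m).2) (D u m).2)

lemma nA_cases (u s a b : ℝ) : nA u s a b = a ∨ nA u s a b = a + 2*s := by
  unfold nA; split_ifs <;> simp

lemma nB_cases (u s a b : ℝ) : nB u s a b = b ∨ nB u s a b = b + 2*s := by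
  unfold nB; split_ifs <;> simp

lemma nA_spec (u s a b : ℝ) (hs : 0 < s) (ha : 2/3 ≤ a) (ha1 : a + 3*s ≤ 1)
    (hb : 2/3 ≤ b) (hb1 : b + 3*s ≤ 1) (hl : a^2*b ≤ u) (hr : u ≤ (a+3*s)^2*(b+3*s)) :
    2/3 ≤ nA u s a b ∧ nA u s a b + s ≤ 1 ∧
    (nA u s a b)^2 * b ≤ u ∧ u ≤ (nA u s a b + s)^2 * (b + 3*s) := by
  have gapfree : (a+2*s)^2*b ≤ (a+s)^2*(b+3*s) := by
    nlinarith [mul_nonneg hs.le (mul_nonneg (by linarith : (0:ℝ) ≤ a) (by linarith : (0:ℝ) ≤ 3*a-2)),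
      mul_nonneg hs.le (mul_nonneg hs.le (by linarith : (0:ℝ) ≤ 2*a-1)),
      mul_nonneg hs.le (mul_nonneg (by linarith : (0:ℝ) ≤ 1-b) (by linarith : (0:ℝ) ≤ 2*a+3*s)),
      mul_nonneg (mul_nonneg hs.le hs.le) hs.le]
  unfold nA
  split_ifs with hc
  · exact ⟨ha, by linarith, hl, hc⟩
  · push_neg at hc
    refine ⟨by linarith, by linarith, by linarith, ?_⟩
    have : (a + 2*s + s)^2 * (b+3*s) = (a+3*s)^2*(b+3*s) := by ring
    linarith [this ▸ hr]

lemma nB_spec (u s a b : ℝ) (hs : 0 < s) (ha : 2/3 ≤ a) (ha1 : a + s ≤ 1)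
    (hb : 2/3 ≤ b) (hb1 : b + 3*s ≤ 1) (hl : a^2*b ≤ u) (hr : u ≤ (a+s)^2*(b+3*s)) :
    2/3 ≤ nB u s a b ∧ nB u s a b + s ≤ 1 ∧
    a^2 * nB u s a b ≤ u ∧ u ≤ (a+s)^2 * (nB u s a b + s) := by
  have gapfree : a^2*(b+2*s) ≤ (a+s)^2*(b+s) := by
    nlinarith [mul_nonneg hs.le (mul_nonneg (by linarith : (0:ℝ) ≤ a) (by linarith : (0:ℝ) ≤ 2*b-a)),
      mul_nonneg hs.le (mul_nonneg hs.le (by linarith : (0:ℝ) ≤ b+s)),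
      mul_nonneg hs.le (mul_nonneg hs.le (by linarith : (0:ℝ) ≤ 2*a))]
  unfold nB
  split_ifs with hc
  · exact ⟨hb, by linarith, hl, hc⟩
  · push_neg at hc
    refine ⟨by linarith, by linarith, by linarith, ?_⟩
    have : (a+s)^2 * (b + 2*s + s) = (a+s)^2*(b+3*s) := by ring
    linarith [this ▸ hr]

lemma D_inv (u : ℝ) (hu1 : 8/27 ≤ u) (hu2 : u ≤ 1) (m : ℕ) :
    2/3 ≤ (D u m).1 ∧ (D u m).1 + 1/3^(m+1) ≤ 1 ∧
    2/3 ≤ (D u m).2 ∧ (D u m).2 + 1/3^(m+1) ≤ 1 ∧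
    (D u m).1^2 * (D u m).2 ≤ u ∧
    u ≤ ((D u m).1 + 1/3^(m+1))^2 * ((D u m).2 + 1/3^(m+1)) := by
  induction m with
  | zero =>
    simp only [D]
    norm_num
    constructor <;> linarith
  | succ m ih =>
    obtain ⟨ha, ha1, hb, hb1, hl, hr⟩ := ih
    set a := (D u m).1 with hadef
    set b := (D u m).2 with hbdef
    set s : ℝ := 1/3^(m+2) with hsdef
    have hs : 0 < s := by positivity
    have h3s : (1:ℝ)/3^(m+1) = 3*s := by
      rw [hsdef]; field_simp; ring
    rw [h3s] at ha1 hb1 hr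
    have hstep1 := nA_spec u s a b hs ha ha1 hb hb1 hl hr
    obtain ⟨ha', ha1', hl', hr'⟩ := hstep1
    have hstep2 := nB_spec u s (nA u s a b) b hs ha' ha1' hb hb1 hl' hr'
    obtain ⟨hb', hb1', hl'', hr''⟩ := hstep2
    have hD1 : (D u (m+1)).1 = nA u s a b := rfl
    have hD2 : (D u (m+1)).2 = nB u s (nA u s a b) b := rfl
    rw [hD1, hD2]
    exact ⟨ha', ha1', hb', hb1', hl'', hr''⟩

noncomputable def digA (u : ℝ) : ℕ → ℝ
  | 0 => 2
  | m+1 => 3^(m+2) * ((D u (m+1)).1 - (D u m).1)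

noncomputable def digB (u : ℝ) : ℕ → ℝ
  | 0 => 2
  | m+1 => 3^(m+2) * ((D u (m+1)).2 - (D u m).2)

lemma digA_mem (u : ℝ) : ∀ k, digA u k = 0 ∨ digA u k = 2 := by
  intro k
  cases k with
  | zero => exact Or.inr rfl
  | succ m =>
    have h := nA_cases u (1/3^(m+2)) (D u m).1 (D u m).2
    have hD1 : (D u (m+1)).1 = nA u (1/3^(m+2)) (D u m).1 (D u m).2 := rfl
    rcases h with h | h
    · left; simp only [digA, hD1, h, sub_self, mul_zero]
    · right
      simp only [digA, hD1, h]
      have h3 : ((3:ℝ)^(m+2)) ≠ 0 := by positivity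
      field_simp
      ring

lemma digB_mem (u : ℝ) : ∀ k, digB u k = 0 ∨ digB u k = 2 := by
  intro k
  cases k with
  | zero => exact Or.inr rfl
  | succ m =>
    have h := nB_cases u (1/3^(m+2)) (nA u (1/3^(m+2)) (D u m).1 (D u m).2) (D u m).2
    have hD2 : (D u (m+1)).2 = nB u (1/3^(m+2)) (nA u (1/3^(m+2)) (D u m).1 (D u m).2) (D u m).2 := rfl
    rcases h with h | h
    · left; simp only [digB, hD2, h, sub_self, mul_zero]
    · right
      simp only [digB, hD2, h]
      have h3 : ((3:ℝ)^(m+2)) ≠ 0 := by positivity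
      field_simp
      ring

lemma partialA (u : ℝ) : ∀ m, ∑ k ∈ Finset.range (m+1), digA u k / 3^(k+1) = (D u m).1 := by
  intro m
  induction m with
  | zero => simp [digA, D]
  | succ m ih =>
    rw [Finset.sum_range_succ, ih]
    show (D u m).1 + digA u (m+1) / 3^(m+1+1) = (D u (m+1)).1
    simp only [digA]
    have h3 : ((3:ℝ)^(m+2)) ≠ 0 := by positivity
    field_simp
    ring

lemma partialB (u : ℝ) : ∀ m, ∑ k ∈ Finset.range (m+1), digB u k / 3^(k+1) = (D u m).2 := by
  intro m
  induction m with
  | zero => simp [digB, D]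
  | succ m ih =>
    rw [Finset.sum_range_succ, ih]
    show (D u m).2 + digB u (m+1) / 3^(m+1+1) = (D u (m+1)).2
    simp only [digB]
    have h3 : ((3:ℝ)^(m+2)) ≠ 0 := by positivity
    field_simp
    ring

lemma main_piece (u : ℝ) (hu1 : 8/27 ≤ u) (hu2 : u ≤ 1) :
    ∃ x ∈ cantorK, ∃ y ∈ cantorK, x^2 * y = u := by
  set x : ℝ := ∑' k : ℕ, digA u k / 3 ^ (k + 1) with hxdef
  set y : ℝ := ∑' k : ℕ, digB u k / 3 ^ (k + 1) with hydef
  refine ⟨x, ⟨digA u, digA_mem u, rfl⟩, y, ⟨digB u, digB_mem u, rfl⟩, ?_⟩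
  have key : ∀ m : ℕ, |x^2*y - u| ≤ 4/3^(m+1) := by
    intro m
    obtain ⟨ha, ha1, hb, hb1, hl, hr⟩ := D_inv u hu1 hu2 m
    set a := (D u m).1
    set b := (D u m).2
    set e : ℝ := 1/3^(m+1) with hedef
    have he : 0 < e := by positivity
    have hxs := sandwich (digA u) (digA_mem u) (m+1)
    have hys := sandwich (digB u) (digB_mem u) (m+1)
    rw [partialA u m] at hxs
    rw [partialB u m] at hys
    have hx1 : a ≤ x := hxs.1
    have hx2 : x ≤ a + e := hxs.2
    have hy1 : b ≤ y := hys.1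
    have hy2 : y ≤ b + e := hys.2
    have hxy1 : a^2*b ≤ x^2*y := by
      gcongr <;> linarith
    have hxy2 : x^2*y ≤ (a+e)^2*(b+e) := by
      gcongr <;> linarith
    have hwidth : (a+e)^2*(b+e) - a^2*b ≤ 4*e := by
      have he1 : e ≤ 1 := by linarith
      have ha0 : 0 ≤ a := by linarith
      have hb0 : 0 ≤ b := by linarith
      have k1 : (a+e)^2 ≤ a^2 + 3*e := by nlinarith
      have k2 : (a+e)^2*(b+e) ≤ (a^2 + 3*e)*(b+e) :=
        mul_le_mul_of_nonneg_right k1 (by linarith)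
      have k3 : (a^2 + 3*e)*(b+e) = a^2*b + a^2*e + 3*e*(b+e) := by ring
      have k4 : a^2*e ≤ e := by
        nlinarith [mul_nonneg (mul_nonneg he.le (by linarith : (0:ℝ) ≤ 1-a)) (by linarith : (0:ℝ) ≤ 1+a)]
      have k5 : 3*e*(b+e) ≤ 3*e := by nlinarith
      linarith
    have he4 : (4:ℝ)/3^(m+1) = 4*e := by rw [hedef]; ring
    rw [abs_le]
    constructor
    · linarith
    · linarith
  by_contra hne
  have hpos : 0 < |x^2*y - u| := abs_pos.2 (sub_ne_zero.2 hne)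
  obtain ⟨n, hn⟩ := pow_unbounded_of_one_lt (4/|x^2*y - u|) (by norm_num : (1:ℝ) < 3)
  have h1 : 4/3^(n:ℕ) < |x^2*y - u| := by
    rw [div_lt_iff₀ (by positivity)]
    rw [div_lt_iff₀ hpos] at hn
    linarith [hn]
  have h2 := key n
  have h3 : (4:ℝ)/3^(n+1) ≤ 4/3^n := by
    gcongr <;> norm_num
  linarith

lemma zero_mem : (0:ℝ) ∈ cantorK := by
  refine ⟨fun _ => 0, fun k => Or.inl rfl, ?_⟩
  simp

lemma div3_mem {x : ℝ} (hx : x ∈ cantorK) : x/3 ∈ cantorK := by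
  obtain ⟨α, hα, rfl⟩ := hx
  set β : ℕ → ℝ := fun k => Nat.casesOn k 0 α with hβdef
  have hβ : ∀ k, β k = 0 ∨ β k = 2 := by
    intro k
    cases k with
    | zero => exact Or.inl rfl
    | succ n => exact hα n
  refine ⟨β, hβ, ?_⟩
  have hsum : Summable (fun k => β k / 3 ^ (k+1)) := summable_digits β hβ
  rw [Summable.tsum_eq_zero_add hsum]
  have hβ0 : β 0 / 3^(0+1) = 0 := by simp [hβdef]
  rw [hβ0, zero_add]
  rw [← tsum_div_const]
  apply tsum_congr
  intro k
  show α k / 3^(k+1) / 3 = β (k+1) / 3^(k+1+1)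
  have : β (k+1) = α k := rfl
  rw [this, pow_succ]
  ring

lemma div_pow3_mem {x : ℝ} (hx : x ∈ cantorK) (i : ℕ) : x/3^i ∈ cantorK := by
  induction i with
  | zero => simpa using hx
  | succ i ih =>
    have : x/3^(i+1) = (x/3^i)/3 := by
      rw [pow_succ, div_div]
    rw [this]
    exact div3_mem ih

lemma coverage (y : ℝ) (hy0 : 0 ≤ y) (hy1 : y ≤ 1) :
    ∃ x ∈ cantorK, ∃ z ∈ cantorK, y = x^2 * z := by
  rcases eq_or_lt_of_le hy0 with h0 | h0
  · exact ⟨0, zero_mem, 0, zero_mem, by rw [← h0]; ring⟩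
  · have hP : ∃ n : ℕ, 1/3^(n+1) < y := by
      obtain ⟨n, hn⟩ := pow_unbounded_of_one_lt (1/y) (by norm_num : (1:ℝ) < 3)
      refine ⟨n, ?_⟩
      rw [div_lt_iff₀ h0] at hn
      have h3 : (0:ℝ) < 3^(n+1) := by positivity
      rw [div_lt_iff₀ h3]
      have hp : (0:ℝ) < 3^n := by positivity
      have hmono : (3:ℝ)^n ≤ 3^(n+1) := by
        rw [pow_succ]; nlinarith
      nlinarith [mul_le_mul_of_nonneg_left hmono hy0]
    set n := Nat.find hP with hndef
    have h1 : 1/3^(n+1) < y := Nat.find_spec hP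
    have h2 : y ≤ 1/3^n := by
      cases hn : n with
      | zero => simpa using hy1
      | succ k =>
        have := Nat.find_min hP (by omega : k < n)
        push_neg at this
        simpa [hn] using this
    set v : ℝ := 3^n * y with hvdef
    have hv1 : 8/27 ≤ v := by
      have : (3:ℝ)^n * (1/3^(n+1)) = 1/3 := by
        rw [pow_succ]; field_simp
      have h4 : (1:ℝ)/3 < v := by
        rw [hvdef, ← this]
        have : (0:ℝ) < 3^n := by positivity
        nlinarith
      linarith
    have hv2 : v ≤ 1 := by
      have h3 : (0:ℝ) < 3^n := by positivity
      rw [hvdef]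
      calc (3:ℝ)^n * y ≤ 3^n * (1/3^n) := mul_le_mul_of_nonneg_left h2 (by positivity)
        _ = 1 := by field_simp
    obtain ⟨x, hx, z, hz, hxz⟩ := main_piece v hv1 hv2
    refine ⟨x/3^(n/2), div_pow3_mem hx (n/2), z/3^(n%2), div_pow3_mem hz (n%2), ?_⟩
    have hnm : 2*(n/2) + n%2 = n := Nat.div_add_mod n 2
    have h3n : ((3:ℝ)^n) = (3^(n/2))^2 * 3^(n%2) := by
      conv_lhs => rw [← hnm]
      rw [pow_add, pow_mul']
    have hy : y = v / 3^n := by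
      rw [hvdef]
      field_simp
    rw [hy, ← hxz, h3n]
    have e1 : ((3:ℝ)^(n/2)) ≠ 0 := by positivity
    have e2 : ((3:ℝ)^(n%2)) ≠ 0 := by positivity
    field_simp
    try ring

end CantorAux

theorem stmt19 :
    (∀ y ∈ Icc (0:ℝ) 1, ∃ x₁ ∈ cantorK, ∃ x₂ ∈ cantorK, ∃ x₃ ∈ cantorK,
      y = x₁ * x₂ * x₃) ∧
    Icc (0:ℝ) 1 ⊆ {y | ∃ x ∈ cantorK, ∃ z ∈ cantorK, y = x^2 * z} := by
  constructor
  · intro y hy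
    obtain ⟨x, hx, z, hz, hxz⟩ := CantorAux.coverage y hy.1 hy.2
    exact ⟨x, hx, x, hx, z, hz, by rw [hxz]; ring⟩
  · intro y hy
    exact CantorAux.coverage y hy.1 hy.2
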